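/- In the q-shuffle algebra V on generators x,y, define alternating words W₀=x, W₁=y, and for k∈ℕ: W_{−k} = xyx⋯x (x-degree k+1, y-degree k), W_{k+1} = yxy⋯y (x-degree k, y-degree k+1), G_k = (yx)^k, G̃_k = (xy)^k (with G₀ = G̃₀ = 1). Then for all k ∈ ℕ: [W₀, W_{k+1}]_⋆ = [W_{−k}, W₁]_⋆ = (1−q⁻²)(G̃_{k+1} − G_{k+1}), where [a,b]_⋆ = a⋆b − b⋆a. -/

import Mathlib

noncomputable section

/-- Words in the letters `x` (= `false`) and `y` (= `true`). -/
abbrev Wd := List Bool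

/-- The underlying vector space of the free algebra `F⟨x,y⟩`,
with the words as a basis. -/
abbrev V (F : Type*) [Field F] := Wd →₀ F

/-- The pairing `⟨u,v⟩` on letters: `2` if equal, `-2` if distinct. -/
def pr (a b : Bool) : ℤ := if a = b then 2 else -2

/-- `⟨u₁,b⟩ + ⟨u₂,b⟩ + ⋯ + ⟨u_r,b⟩` for a word `u` and a letter `b`. -/
def wsum (u : Wd) (b : Bool) : ℤ := (u.map fun a => pr a b).sum

variable {F : Type*} [Field F]

/-- Left multiplication by a letter, in the free (concatenation) algebra. -/
def lmul (a : Bool) (f : V F) : V F := Finsupp.mapDomain (fun w => a :: w) f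

/-- The `q`-shuffle product of two words (as an element of `V F`), defined by
Rosso's recursion
`u ⋆ v = u₁((u₂⋯u_r) ⋆ v) + q^{⟨u₁,v₁⟩+⋯+⟨u_r,v₁⟩} v₁(u ⋆ (v₂⋯v_s))`. -/
def sh (q : F) : Wd → Wd → V F
  | [], v => Finsupp.single v 1
  | u@(_ :: _), [] => Finsupp.single u 1
  | a :: u', b :: v' =>
      lmul a (sh q u' (b :: v')) +
        q ^ wsum (a :: u') b • lmul b (sh q (a :: u') v')
  termination_by u v => u.length + v.length
  decreasing_by all_goals (simp only [List.length_cons]; omega)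

/-- The `q`-shuffle product on `V F`, extended bilinearly from words. -/
def st (q : F) (f g : V F) : V F :=
  f.sum fun u cu => g.sum fun v cv => (cu * cv) • sh q u v

/-- The concatenation (free-algebra) product on `V F`. -/
def cm (f g : V F) : V F :=
  f.sum fun u cu => g.sum fun v cv => Finsupp.single (u ++ v) (cu * cv)

/-- Powers with respect to the concatenation product. -/
def cpow (f : V F) : ℕ → V F
  | 0 => Finsupp.single [] 1
  | n + 1 => cm f (cpow f n)

/-- The alternating word `W_{-k} = xyx⋯x` of length `2k+1`. -/
def altX : ℕ → Wd
  | 0 => [false]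
  | k + 1 => false :: true :: altX k

/-- The alternating word `W_{k+1} = yxy⋯y` of length `2k+1`. -/
def altY : ℕ → Wd
  | 0 => [true]
  | k + 1 => true :: false :: altY k

/-- The alternating word `G_k = (yx)^k`. -/
def gw : ℕ → Wd
  | 0 => []
  | k + 1 => true :: false :: gw k

/-- The alternating word `G̃_k = (xy)^k`. -/
def gtw : ℕ → Wd
  | 0 => []
  | k + 1 => false :: true :: gtw k

/-- `W_{-k}` as an element of `V F`. -/
def Wm (F : Type*) [Field F] (k : ℕ) : V F := Finsupp.single (altX k) 1

/-- `W_{k+1}` as an element of `V F`. -/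
def Wp (F : Type*) [Field F] (k : ℕ) : V F := Finsupp.single (altY k) 1

/-- `G_k` as an element of `V F`. -/
def Gn (F : Type*) [Field F] (k : ℕ) : V F := Finsupp.single (gw k) 1

/-- `G̃_k` as an element of `V F`. -/
def Gt (F : Type*) [Field F] (k : ℕ) : V F := Finsupp.single (gtw k) 1

/-- `[W₀, W_{k+1}] = [W_{−k}, W₁] = (1−q⁻²)(G̃_{k+1} − G_{k+1})`. -/
lemma sh_cons_cons (q : F) (a b : Bool) (u' v' : Wd) :
    sh q (a :: u') (b :: v') =
      lmul a (sh q u' (b :: v')) + q ^ wsum (a :: u') b • lmul b (sh q (a :: u') v') := by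
  rw [sh]

lemma sh_nil (q : F) (v : Wd) : sh q [] v = Finsupp.single v 1 := by rw [sh]

lemma sh_nil' (q : F) (a : Bool) (u : Wd) : sh q (a :: u) [] = Finsupp.single (a :: u) 1 := by
  rw [sh]

lemma lmul_single (a : Bool) (w : Wd) (c : F) :
    lmul a (Finsupp.single w c) = Finsupp.single (a :: w) c := by
  simp [lmul, Finsupp.mapDomain_single]

lemma lmul_add (a : Bool) (f g : V F) : lmul a (f + g) = lmul a f + lmul a g := by
  simp [lmul, Finsupp.mapDomain_add]

lemma lmul_smul (a : Bool) (c : F) (f : V F) : lmul a (c • f) = c • lmul a f := by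
  simp [lmul, Finsupp.mapDomain_smul]

lemma lmul_sub (a : Bool) (f g : V F) : lmul a (f - g) = lmul a f - lmul a g := by
  have : f - g = f + (-1 : F) • g := by module
  rw [this, lmul_add, lmul_smul]; module

lemma wsum_cons (a : Bool) (u : Wd) (b : Bool) : wsum (a :: u) b = pr a b + wsum u b := by
  simp [wsum]

lemma wsum_altY_x (k : ℕ) : wsum (altY k) false = -2 := by
  induction k with
  | zero => simp [altY, wsum, pr]
  | succ k ih => simp [altY, wsum_cons, ih, pr]

lemma wsum_altX_y (k : ℕ) : wsum (altX k) true = -2 := by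
  induction k with
  | zero => simp [altX, wsum, pr]
  | succ k ih => simp [altX, wsum_cons, ih, pr]

lemma gtw_succ (k : ℕ) : gtw (k + 1) = false :: altY k := by
  induction k with
  | zero => rfl
  | succ k ih => show false :: true :: gtw (k+1) = _; rw [ih]; rfl

lemma gw_succ (k : ℕ) : gw (k + 1) = true :: altX k := by
  induction k with
  | zero => rfl
  | succ k ih => show true :: false :: gw (k+1) = _; rw [ih]; rfl

lemma st_single (q : F) (u v : Wd) :
    st q (Finsupp.single u (1:F)) (Finsupp.single v 1) = sh q u v := by
  simp [st, Finsupp.sum_single_index]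

lemma zq_neg (q : F) : q ^ (-2 : ℤ) = (q⁻¹) ^ 2 := by
  rw [show (-2:ℤ) = -((2:ℕ):ℤ) by norm_num, zpow_neg, zpow_natCast, inv_pow]

lemma zq_pos (q : F) : q ^ (2 : ℤ) = q ^ (2:ℕ) := by
  rw [show (2:ℤ) = ((2:ℕ):ℤ) by norm_num, zpow_natCast]

lemma keyA (q : F) (hq : q ≠ 0) (k : ℕ) :
    sh q [false] (altY k) - sh q (altY k) [false]
      = (1 - (q⁻¹)^2) • ((Finsupp.single (gtw (k+1)) 1 : V F) - Finsupp.single (gw (k+1)) 1) := by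
  induction k with
  | zero =>
      have h1 : wsum [false] true = -2 := by simp [wsum, pr]
      have h2 : wsum [true] false = -2 := by simp [wsum, pr]
      rw [show altY 0 = [true] from rfl]
      simp only [sh_cons_cons, sh_nil, sh_nil', h1, h2, lmul_add, lmul_smul, lmul_single,
        zq_neg, show gtw 1 = [false, true] from rfl, show gw 1 = [true, false] from rfl]
      match_scalars <;> ring
  | succ k ih =>
      have h1 : wsum [false] true = -2 := by simp [wsum, pr]
      have h2 : wsum [false] false = 2 := by simp [wsum, pr]
      have h3 : wsum (false :: altY k) false = 0 := by
        simp [wsum_cons, wsum_altY_x, pr]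
      have h4 : wsum (true :: false :: altY k) false = -2 := by
        simp [wsum_cons, wsum_altY_x, pr]
      have hA : sh q [false] (altY k) = sh q (altY k) [false]
          + (1 - (q⁻¹)^2) • ((Finsupp.single (gtw (k+1)) 1 : V F) - Finsupp.single (gw (k+1)) 1) := by
        rw [← ih]; abel
      have w1 : gtw (k+1+1) = false :: true :: false :: altY k := by
        rw [show gtw (k+1+1) = false :: true :: gtw (k+1) from rfl, gtw_succ]
      have w2 : (true : Bool) :: false :: gtw (k+1) = true :: false :: false :: altY k := by
        rw [gtw_succ]
      have w3 : (true : Bool) :: false :: gw (k+1) = gw (k+1+1) := rfl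
      rw [show altY (k+1) = true :: false :: altY k from rfl]
      simp only [sh_cons_cons, sh_nil, sh_nil', h1, h2, h3, h4, hA, lmul_add, lmul_sub, lmul_smul,
        lmul_single, zq_neg, zq_pos, zpow_zero, one_smul, smul_sub, w1, w2, w3]
      match_scalars <;> field_simp <;> ring

lemma keyC (q : F) (hq : q ≠ 0) (k : ℕ) :
    sh q (altX k) [true] - sh q [true] (altX k)
      = (1 - (q⁻¹)^2) • ((Finsupp.single (gtw (k+1)) 1 : V F) - Finsupp.single (gw (k+1)) 1) := by
  induction k with
  | zero =>
      have h1 : wsum [false] true = -2 := by simp [wsum, pr]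
      have h2 : wsum [true] false = -2 := by simp [wsum, pr]
      rw [show altX 0 = [false] from rfl]
      simp only [sh_cons_cons, sh_nil, sh_nil', h1, h2, lmul_add, lmul_smul, lmul_single,
        zq_neg, show gtw 1 = [false, true] from rfl, show gw 1 = [true, false] from rfl]
      match_scalars <;> ring
  | succ k ih =>
      have h1 : wsum [true] false = -2 := by simp [wsum, pr]
      have h2 : wsum [true] true = 2 := by simp [wsum, pr]
      have h3 : wsum (true :: altX k) true = 0 := by
        simp [wsum_cons, wsum_altX_y, pr]
      have h4 : wsum (false :: true :: altX k) true = -2 := by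
        simp [wsum_cons, wsum_altX_y, pr]
      have hC : sh q [true] (altX k) = sh q (altX k) [true]
          - (1 - (q⁻¹)^2) • ((Finsupp.single (gtw (k+1)) 1 : V F) - Finsupp.single (gw (k+1)) 1) := by
        rw [← ih]; abel
      have w1 : gw (k+1+1) = true :: false :: true :: altX k := by
        rw [show gw (k+1+1) = true :: false :: gw (k+1) from rfl, gw_succ]
      have w2 : (false : Bool) :: true :: gw (k+1) = false :: true :: true :: altX k := by
        rw [gw_succ]
      have w3 : (false : Bool) :: true :: gtw (k+1) = gtw (k+1+1) := rfl
      rw [show altX (k+1) = false :: true :: altX k from rfl]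
      simp only [sh_cons_cons, sh_nil, sh_nil', h1, h2, h3, h4, hC, lmul_add, lmul_sub, lmul_smul,
        lmul_single, zq_neg, zq_pos, zpow_zero, one_smul, smul_sub, w1, w2, w3]
      match_scalars <;> field_simp <;> ring

theorem stmt_1 {F : Type*} [Field F] (q : F) (hq : q ≠ 0)
    (hq' : ∀ n : ℕ, 0 < n → q ^ n ≠ 1) (k : ℕ) :
    st q (Wm F 0) (Wp F k) - st q (Wp F k) (Wm F 0)
        = (1 - (q⁻¹) ^ 2) • (Gt F (k + 1) - Gn F (k + 1)) ∧
    st q (Wm F k) (Wp F 0) - st q (Wp F 0) (Wm F k)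
        = (1 - (q⁻¹) ^ 2) • (Gt F (k + 1) - Gn F (k + 1)) := by
  constructor
  · rw [Wm, Wp, Gt, Gn, show altX 0 = [false] from rfl, st_single, st_single]
    exact keyA q hq k
  · rw [Wm, Wp, Gt, Gn, show altY 0 = [true] from rfl, st_single, st_single]
    exact keyC q hq k
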